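/- Let S be an antipodal point set of 2n points on the unit circle, n odd. An antipodal polygon P on S is thick if and only if the vertices of P alternate with the non-vertices in the circular order of S, i.e., no two points of S adjacent in circular order are both vertices of P. -/

import Mathlib

open MeasureTheory

/-- The point on the unit circle at angle `θ`. -/
noncomputable def pt (θ : ℝ) : ℝ × ℝ := (Real.cos θ, Real.sin θ)

/-- Standard dot product in the plane. -/
noncomputable def dotp (v w : ℝ × ℝ) : ℝ := v.1 * w.1 + v.2 * w.2

/-- Given angles `θ : Fin n → ℝ` (determining the antipodal point set
`{pt (θ i)} ∪ {-pt (θ i)}`) and a selection `ε`, the `i`-th vertex of the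
corresponding antipodal polygon: `pt (θ i)` if `ε i` and `-pt (θ i)` otherwise. -/
noncomputable def vtx {n : ℕ} (θ : Fin n → ℝ) (ε : Fin n → Bool) (i : Fin n) : ℝ × ℝ :=
  if ε i then pt (θ i) else -pt (θ i)

/-- The antipodal polygon determined by the selection `ε`. -/
noncomputable def apoly {n : ℕ} (θ : Fin n → ℝ) (ε : Fin n → Bool) : Set (ℝ × ℝ) :=
  convexHull ℝ (Set.range (vtx θ ε))

/-- The antipodal polygon is thin: all vertices lie in a closed half-plane
bounded by a line through the origin. -/
def Thin {n : ℕ} (θ : Fin n → ℝ) (ε : Fin n → Bool) : Prop :=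
  ∃ v : ℝ × ℝ, v ≠ 0 ∧ ∀ i, 0 ≤ dotp v (vtx θ ε i)

/-- The antipodal polygon is thick: every open half-plane bounded by a line
through the origin contains at least `⌈(n-2)/2⌉ = (n-1)/2` of its vertices. -/
def Thick {n : ℕ} (θ : Fin n → ℝ) (ε : Fin n → Bool) : Prop :=
  ∀ v : ℝ × ℝ, v ≠ 0 →
    (n - 1) / 2 ≤ Set.ncard {i : Fin n | 0 < dotp v (vtx θ ε i)}

/-- The `j`-th point (indices mod `2*n`) of the antipodal point set in circular
order `pt (θ 0), …, pt (θ (n-1)), -pt (θ 0), …, -pt (θ (n-1))`. -/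
noncomputable def spt {n : ℕ} (θ : Fin n → ℝ) (j : ℕ) : ℝ × ℝ :=
  if h : j % (2 * n) < n then pt (θ ⟨j % (2 * n), h⟩)
  else if h2 : j % (2 * n) - n < n then -pt (θ ⟨j % (2 * n) - n, h2⟩) else 0

/-- Whether the `j`-th point (indices mod `2*n`) of the antipodal point set, in the
circular order `pt (θ 0), …, pt (θ (n-1)), -pt (θ 0), …, -pt (θ (n-1))`,
is a vertex of the antipodal polygon selected by `ε`. -/
def chosen {n : ℕ} (ε : Fin n → Bool) (j : ℕ) : Bool :=
  if h : j % (2 * n) < n then ε ⟨j % (2 * n), h⟩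
  else if h2 : j % (2 * n) - n < n then !(ε ⟨j % (2 * n) - n, h2⟩) else false

/-! ### Auxiliary lemmas -/

section Aux

open Real Finset

/-! #### Basic facts about `pt` and `dotp` -/

lemma pt_ne_zero (t : ℝ) : pt t ≠ 0 := by
  intro h
  have h1 : Real.cos t = 0 := congrArg Prod.fst h
  have h2 : Real.sin t = 0 := congrArg Prod.snd h
  nlinarith [Real.sin_sq_add_cos_sq t]

lemma dotp_pt_pt (β γ : ℝ) : dotp (pt β) (pt γ) = Real.cos (γ - β) := by
  simp [dotp, pt, Real.cos_sub]; ring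

lemma pt_add_pi (t : ℝ) : pt (t + π) = -pt t := by
  simp [pt, Prod.ext_iff, Real.cos_add_pi, Real.sin_add_pi]

lemma pt_add_nat_mul_two_pi (t : ℝ) (q : ℕ) : pt (t + q * (2*π)) = pt t := by
  simp [pt, Prod.ext_iff, Real.cos_add_nat_mul_two_pi, Real.sin_add_nat_mul_two_pi]

/-! #### Sign structure of a linear functional on the upper half circle -/

lemma tri_helper {c t x : ℝ} (h1 : x < t → 0 < c) (h2 : x = t → c = 0) (h3 : t < x → c < 0) :
    (0 < c ↔ x < t) ∧ (c < 0 ↔ t < x) := by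
  rcases lt_trichotomy x t with h | h | h
  · have := h1 h
    constructor <;> constructor <;> intro h' <;> first | exact h | linarith
  · have := h2 h
    constructor <;> constructor <;> intro h' <;> linarith
  · have := h3 h
    constructor <;> constructor <;> intro h' <;> first | exact h | linarith

lemma tri_helper' {c t x : ℝ} (h1 : x < t → c < 0) (h2 : x = t → c = 0) (h3 : t < x → 0 < c) :
    (0 < c ↔ t < x) ∧ (c < 0 ↔ x < t) := by
  rcases lt_trichotomy x t with h | h | h
  · have := h1 h
    constructor <;> constructor <;> intro h' <;> first | exact h | linarith
  · have := h2 h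
    constructor <;> constructor <;> intro h' <;> linarith
  · have := h3 h
    constructor <;> constructor <;> intro h' <;> first | exact h | linarith

lemma sign_struct (a b : ℝ) (hab : ¬(a = 0 ∧ b = 0)) :
    ∃ t, 0 ≤ t ∧ t < π ∧ ∃ s : Bool, ∀ x, 0 ≤ x → x < π →
      ((0 < a * Real.cos x + b * Real.sin x ↔ (if s then x < t else t < x)) ∧
       (a * Real.cos x + b * Real.sin x < 0 ↔ (if s then t < x else x < t))) := by
  have pipos := Real.pi_pos
  set z : ℂ := ⟨a, b⟩ with hz
  have hz0 : z ≠ 0 := by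
    intro h; exact hab ⟨congrArg Complex.re h, congrArg Complex.im h⟩
  set r : ℝ := ‖z‖ with hr
  set α : ℝ := Complex.arg z with hα
  have hrpos : 0 < r := norm_pos_iff.mpr hz0
  have ha : a = r * Real.cos α := by
    show z.re = _
    rw [hα, hr, Complex.cos_arg hz0, mul_div_assoc', mul_comm,
      mul_div_assoc, div_self (norm_ne_zero_iff.mpr hz0), mul_one]
  have hb : b = r * Real.sin α := by
    show z.im = _
    rw [hα, hr, Complex.sin_arg, mul_div_assoc', mul_comm,
      mul_div_assoc, div_self (norm_ne_zero_iff.mpr hz0), mul_one]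
  have key : ∀ x : ℝ, a * Real.cos x + b * Real.sin x = r * Real.cos (x - α) := by
    intro x; rw [ha, hb, Real.cos_sub]; ring
  have hagt : -π < α := Complex.neg_pi_lt_arg z
  have hale : α ≤ π := Complex.arg_le_pi z
  rcases le_or_gt (-(π/2)) α with hge | hlt
  · rcases lt_or_ge α (π/2) with hlt2 | hge2
    · -- case (i): t = α + π/2, s = true
      refine ⟨α + π/2, by linarith, by linarith, true, ?_⟩
      intro x hx0 hxpi
      rw [key x]
      simp only [reduceIte]
      exact tri_helper
        (fun h => by
          have : 0 < Real.cos (x - α) := Real.cos_pos_of_mem_Ioo ⟨by linarith, by linarith⟩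
          positivity)
        (fun h => by rw [h, show α + π/2 - α = π/2 by ring, Real.cos_pi_div_two, mul_zero])
        (fun h => by
          have : Real.cos (x - α) < 0 :=
            Real.cos_neg_of_pi_div_two_lt_of_lt (by linarith) (by linarith)
          nlinarith)
    · -- case (ii): α ∈ [π/2, π], t = α - π/2, s = false
      refine ⟨α - π/2, by linarith, by linarith, false, ?_⟩
      intro x hx0 hxpi
      rw [key x]
      simp only [Bool.false_eq_true, if_false]
      exact tri_helper'
        (fun h => by
          have : Real.cos (x - α) < 0 := by
            rw [← Real.cos_neg, show -(x - α) = α - x by ring]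
            exact Real.cos_neg_of_pi_div_two_lt_of_lt (by linarith) (by linarith)
          nlinarith)
        (fun h => by rw [h, show α - π/2 - α = -(π/2) by ring, Real.cos_neg,
            Real.cos_pi_div_two, mul_zero])
        (fun h => by
          have : 0 < Real.cos (x - α) := Real.cos_pos_of_mem_Ioo ⟨by linarith, by linarith⟩
          positivity)
  · -- case (iii): α ∈ (-π, -π/2), t = α + π/2 + π, s = false
    refine ⟨α + π/2 + π, by linarith, by linarith, false, ?_⟩
    intro x hx0 hxpi
    rw [key x]
    simp only [Bool.false_eq_true, if_false]
    exact tri_helper'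
      (fun h => by
        have : Real.cos (x - α) < 0 :=
          Real.cos_neg_of_pi_div_two_lt_of_lt (by linarith) (by linarith)
        nlinarith)
      (fun h => by
        rw [h, show α + π/2 + π - α = π/2 + π by ring, Real.cos_add_pi,
          Real.cos_pi_div_two, neg_zero, mul_zero])
      (fun h => by
        have : 0 < Real.cos (x - α) := by
          rw [← Real.cos_sub_two_pi]
          exact Real.cos_pos_of_mem_Ioo ⟨by linarith, by linarith⟩
        positivity)

/-! #### Facts about `chosen` -/

variable {n : ℕ}

lemma chosen_congr (ε : Fin n → Bool) {j j' : ℕ} (h : j % (2*n) = j' % (2*n)) :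
    chosen ε j = chosen ε j' := by unfold chosen; rw [h]

lemma chosen_lt (ε : Fin n → Bool) {j : ℕ} (h : j < n) : chosen ε j = ε ⟨j, h⟩ := by
  have hm : j % (2*n) = j := Nat.mod_eq_of_lt (by omega)
  unfold chosen
  simp only [hm]
  rw [dif_pos h]

lemma chosen_add_n (hn : 0 < n) (ε : Fin n → Bool) (j : ℕ) :
    chosen ε (j + n) = !chosen ε j := by
  have hr : j % (2*n) < 2*n := Nat.mod_lt _ (by omega)
  have hmod : (j + n) % (2*n) = (j % (2*n) + n) % (2*n) := by
    conv_lhs => rw [← Nat.mod_add_div j (2*n)]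
    rw [Nat.add_right_comm, Nat.add_mul_mod_self_left]
  by_cases hc : j % (2*n) < n
  · have h2 : (j % (2*n) + n) % (2*n) = j % (2*n) + n := Nat.mod_eq_of_lt (by omega)
    unfold chosen
    simp only [hmod, h2]
    rw [dif_neg (by omega), dif_pos (by omega : j % (2*n) + n - n < n), dif_pos hc]
    simp
  · have h2 : (j % (2*n) + n) % (2*n) = j % (2*n) - n := by
      rw [show j % (2*n) + n = 2*n + (j % (2*n) - n) by omega, Nat.add_mod_left,
        Nat.mod_eq_of_lt (by omega)]
    unfold chosen
    simp only [hmod, h2]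
    rw [dif_pos (by omega : j % (2*n) - n < n), dif_neg hc, dif_pos (by omega)]
    simp

lemma chosen_succ {ε : Fin n → Bool} (hn : 0 < n)
    (hna : ∀ j, ¬ (chosen ε j = true ∧ chosen ε (j + 1) = true)) (j : ℕ) :
    chosen ε (j+1) = !chosen ε j := by
  cases hc : chosen ε j with
  | true =>
    have := hna j
    cases h : chosen ε (j+1) with
    | true => exact absurd ⟨hc, h⟩ this
    | false => rfl
  | false =>
    have h1 : chosen ε (j+n) = true := by rw [chosen_add_n hn, hc]; rfl
    have h2 : chosen ε (j+n+1) = false := by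
      have := hna (j+n)
      cases h : chosen ε (j+n+1) with
      | true => exact absurd ⟨h1, h⟩ this
      | false => rfl
    have h3 : chosen ε (j+1+n) = !chosen ε (j+1) := chosen_add_n hn ε (j+1)
    rw [show j+1+n = j+n+1 by omega, h2] at h3
    simp at h3
    rw [h3]
    rfl

lemma chosen_formula {ε : Fin n → Bool} (hn : 0 < n)
    (halt : ∀ j, chosen ε (j+1) = !chosen ε j) (j : ℕ) :
    chosen ε j = (ε ⟨0, hn⟩).xor (decide (j % 2 = 1)) := by
  induction j with
  | zero => rw [chosen_lt ε hn]; simp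
  | succ j ih =>
    rw [halt j, ih]
    by_cases h : j % 2 = 1
    · have h2 : (j+1) % 2 = 0 := by omega
      simp [h, h2]
    · have h2 : (j+1) % 2 = 1 := by omega
      have h3 : j % 2 = 0 := by omega
      simp [h2, h3]

/-! #### Counting lemmas -/

lemma card_mod2 (r : ℕ) (hr : r < 2) (m : ℕ) :
    ((Finset.range m).filter (fun i => i % 2 = r)).card = (m + 1 - r) / 2 := by
  induction m with
  | zero => simp; omega
  | succ m ih =>
    rw [Finset.range_add_one, Finset.filter_insert]
    by_cases h : m % 2 = r
    · rw [if_pos h, Finset.card_insert_of_notMem (by simp), ih]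
      omega
    · rw [if_neg h, ih]
      omega

lemma lower_card {P : Fin n → Prop} [DecidablePred P]
    (hdown : ∀ i j : Fin n, j ≤ i → P i → P j) (i : Fin n) :
    P i ↔ i.val < (Finset.univ.filter P).card := by
  constructor
  · intro h
    have hsub : Finset.Iic i ⊆ Finset.univ.filter P := by
      intro j hj
      simp only [Finset.mem_Iic] at hj
      simp only [Finset.mem_filter, Finset.mem_univ, true_and]
      exact hdown i j hj h
    have := Finset.card_le_card hsub
    simp at this
    omega
  · intro h
    by_contra hP
    have hsub : Finset.univ.filter P ⊆ Finset.Iio i := by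
      intro j hj
      simp only [Finset.mem_filter, Finset.mem_univ, true_and] at hj
      simp only [Finset.mem_Iio]
      by_contra hij
      exact hP (hdown j i (le_of_not_gt hij) hj)
    have := Finset.card_le_card hsub
    simp at this
    omega

lemma card_filter_val (Q : ℕ → Prop) [DecidablePred Q] :
    ((Finset.univ : Finset (Fin n)).filter (fun i => Q i.val)).card
      = ((Finset.range n).filter Q).card := by
  apply Finset.card_bij (fun i _ => i.val)
  · intro a ha
    simp only [Finset.mem_filter, Finset.mem_univ, true_and] at ha
    simp [a.isLt, ha]
  · intro a _ b _ h
    exact Fin.ext h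
  · intro b hb
    simp only [Finset.mem_filter, Finset.mem_range] at hb
    exact ⟨⟨b, hb.1⟩, by simp [hb.2], rfl⟩

/-! #### The circular order of angles -/

noncomputable def ang {n : ℕ} (hn : 0 < n) (θ : Fin n → ℝ) (j : ℕ) : ℝ :=
  θ ⟨j % n, Nat.mod_lt j hn⟩ + Real.pi * (j / n : ℕ)

variable {θ : Fin n → ℝ}

lemma ang_lt_succ (hn : 0 < n) (hmono : StrictMono θ)
    (hrange : ∀ i, θ i ∈ Set.Ico 0 Real.pi) (j : ℕ) :
    ang hn θ j < ang hn θ (j+1) := by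
  by_cases h : j % n + 1 < n
  · have hn2 : 1 < n := by omega
    have h1 : (j+1) % n = j % n + 1 := by
      rw [Nat.add_mod, Nat.mod_eq_of_lt hn2, Nat.mod_eq_of_lt h]
    have h2 : (j+1)/n = j/n := by
      conv_lhs => rw [← Nat.div_add_mod j n]
      rw [Nat.add_assoc, Nat.mul_add_div hn, Nat.div_eq_of_lt h, Nat.add_zero]
    have e1 : (⟨(j+1) % n, Nat.mod_lt _ hn⟩ : Fin n) = ⟨j % n + 1, by omega⟩ := Fin.ext h1
    unfold ang
    rw [e1, h2]
    have := hmono (show (⟨j % n, Nat.mod_lt j hn⟩ : Fin n) < ⟨j % n + 1, by omega⟩ from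
      Nat.lt_succ_self _)
    linarith
  · have hr : j % n = n - 1 := by have := Nat.mod_lt j hn; omega
    have hj1 : j + 1 = n * (j/n + 1) := by
      conv_lhs => rw [← Nat.div_add_mod j n]
      rw [hr, Nat.mul_succ]
      omega
    have h1 : (j+1) % n = 0 := by rw [hj1, Nat.mul_mod_right]
    have h2 : (j+1)/n = j/n + 1 := by rw [hj1, Nat.mul_div_cancel_left _ hn]
    have e1 : (⟨(j+1) % n, Nat.mod_lt _ hn⟩ : Fin n) = ⟨0, hn⟩ := Fin.ext h1
    unfold ang
    rw [e1, h2]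
    have hA := (hrange ⟨j % n, Nat.mod_lt j hn⟩).2
    have hB := (hrange ⟨0, hn⟩).1
    push_cast
    linarith

lemma ang_mono (hn : 0 < n) (hmono : StrictMono θ)
    (hrange : ∀ i, θ i ∈ Set.Ico 0 Real.pi) : Monotone (ang hn θ) :=
  monotone_nat_of_le_succ (fun j => (ang_lt_succ hn hmono hrange j).le)

lemma ang_add_n (hn : 0 < n) (j : ℕ) : ang hn θ (j + n) = ang hn θ j + Real.pi := by
  have e : (⟨(j+n) % n, Nat.mod_lt _ hn⟩ : Fin n) = ⟨j % n, Nat.mod_lt j hn⟩ :=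
    Fin.ext (Nat.add_mod_right j n)
  unfold ang
  rw [e, Nat.add_div_right _ hn]
  push_cast
  ring

lemma ang_rep (hn : 0 < n) (q r : ℕ) :
    ang hn θ (2*n*q + r) = ang hn θ r + q * (2 * Real.pi) := by
  induction q with
  | zero => simp
  | succ q ih =>
    rw [show 2*n*(q+1) + r = ((2*n*q + r) + n) + n by ring, ang_add_n hn, ang_add_n hn, ih]
    push_cast
    ring

lemma spt_eq (hn : 0 < n) (j : ℕ) : spt θ j = pt (ang hn θ j) := by
  have hr2 : j % (2*n) < 2*n := Nat.mod_lt _ (by omega)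
  have h1 : ang hn θ j = ang hn θ (j % (2*n)) + (j/(2*n) : ℕ) * (2*Real.pi) := by
    conv_lhs => rw [← Nat.div_add_mod j (2*n)]
    exact ang_rep hn _ _
  rw [h1, pt_add_nat_mul_two_pi]
  by_cases hc : j % (2*n) < n
  · have hm : j % (2*n) % n = j % (2*n) := Nat.mod_eq_of_lt hc
    have hd : j % (2*n) / n = 0 := Nat.div_eq_of_lt hc
    have e : (⟨j % (2*n) % n, Nat.mod_lt _ hn⟩ : Fin n) = ⟨j % (2*n), hc⟩ := Fin.ext hm
    unfold spt ang
    rw [dif_pos hc, e, hd]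
    simp
  · have hm : j % (2*n) % n = j % (2*n) - n := by
      conv_lhs => rw [show j % (2*n) = n + (j % (2*n) - n) by omega]
      rw [Nat.add_mod_left, Nat.mod_eq_of_lt (by omega)]
    have hd : j % (2*n) / n = 1 := by
      conv_lhs => rw [show j % (2*n) = (j % (2*n) - n) + n by omega]
      rw [Nat.add_div_right _ hn, Nat.div_eq_of_lt (by omega), Nat.zero_add]
    have e : (⟨j % (2*n) % n, Nat.mod_lt _ hn⟩ : Fin n) = ⟨j % (2*n) - n, by omega⟩ :=
      Fin.ext hm
    unfold spt ang
    rw [dif_neg hc]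
    rw [dif_pos (by omega : j % (2*n) - n < n)]
    rw [e]
    rw [hd]
    norm_num [pt_add_pi]

/-! #### Window counts -/

def cwin {n : ℕ} (ε : Fin n → Bool) (m : ℕ) : ℕ :=
  ((Finset.range n).filter (fun l => chosen ε (m + l) = true)).card

lemma cwin_congr (ε : Fin n → Bool) {m m' : ℕ} (h : m % (2*n) = m' % (2*n)) :
    cwin ε m = cwin ε m' := by
  unfold cwin
  congr 1
  apply Finset.filter_congr
  intro l _
  have : (m + l) % (2*n) = (m' + l) % (2*n) := Nat.ModEq.add_right l h
  rw [chosen_congr ε this]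

lemma cwin_flip (hn : 0 < n) (ε : Fin n → Bool) (m : ℕ) :
    cwin ε (m + n) + cwin ε m = n := by
  have e : (Finset.range n).filter (fun l => chosen ε (m + n + l) = true)
      = (Finset.range n).filter (fun l => ¬(chosen ε (m + l) = true)) := by
    apply Finset.filter_congr
    intro l _
    rw [show m + n + l = (m + l) + n by omega, chosen_add_n hn]
    simp
  unfold cwin
  rw [e]
  have := Finset.card_filter_add_card_filter_not
    (s := Finset.range n) (p := fun l => chosen ε (m + l) = true)
  simp only [Finset.card_range] at this
  omega

lemma cwin_sum (ε : Fin n → Bool) (m : ℕ) :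
    cwin ε m = ∑ l ∈ Finset.range n, (if chosen ε (m + l) = true then 1 else 0) := by
  unfold cwin
  rw [Finset.card_filter]

lemma cwin_step (hn : 0 < n) (ε : Fin n → Bool) (m : ℕ) (h : chosen ε m = true) :
    cwin ε (m + 1) + 1 = cwin ε m := by
  obtain ⟨n', rfl⟩ : ∃ n', n = n' + 1 := ⟨n - 1, by omega⟩
  rw [cwin_sum, cwin_sum]
  rw [Finset.sum_range_succ' (fun l => if chosen ε (m + l) = true then 1 else 0) n']
  rw [Finset.sum_range_succ]
  have e1 : ∀ i, (if chosen ε (m + (i + 1)) = true then 1 else 0)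
      = (if chosen ε (m + 1 + i) = true then 1 else 0) := by
    intro i; rw [show m + (i + 1) = m + 1 + i by omega]
  rw [Finset.sum_congr rfl (fun i _ => e1 i)]
  have h2 : chosen ε (m + 1 + n') = false := by
    rw [show m + 1 + n' = m + (n' + 1) by omega, chosen_add_n hn, h]
    rfl
  simp only [Nat.add_zero, h, h2]
  simp

/-! #### The half-plane realizing a window -/

lemma window_halfplane (hn : 0 < n) (hmono : StrictMono θ)
    (hrange : ∀ i, θ i ∈ Set.Ico 0 Real.pi) (M : ℕ) :
    ∃ v : ℝ × ℝ, v ≠ 0 ∧ ∀ q, M ≤ q →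
      (q < M + n → 0 < dotp v (spt θ q)) ∧
      (M + n ≤ q → q < M + 2*n → dotp v (spt θ q) < 0) := by
  have pipos := Real.pi_pos
  set β := (ang hn θ M + ang hn θ (M + n - 1))/2 with hβ
  refine ⟨pt β, pt_ne_zero β, ?_⟩
  have hd1 : ang hn θ M ≤ ang hn θ (M + n - 1) := ang_mono hn hmono hrange (by omega)
  have hd2 : ang hn θ (M + n - 1) < ang hn θ M + Real.pi := by
    have := ang_lt_succ hn hmono hrange (M + n - 1)
    rw [show M + n - 1 + 1 = M + n by omega, ang_add_n hn] at this
    linarith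
  intro q hq
  constructor
  · intro hlt
    rw [spt_eq hn, dotp_pt_pt]
    have hub : ang hn θ q ≤ ang hn θ (M+n-1) := ang_mono hn hmono hrange (by omega)
    have hlb : ang hn θ M ≤ ang hn θ q := ang_mono hn hmono hrange hq
    exact Real.cos_pos_of_mem_Ioo ⟨by rw [hβ]; linarith, by rw [hβ]; linarith⟩
  · intro hge hlt2
    rw [spt_eq hn, dotp_pt_pt]
    have heq : ang hn θ q = ang hn θ (q - n) + Real.pi := by
      rw [← ang_add_n hn, show q - n + n = q by omega]
    have hub : ang hn θ (q-n) ≤ ang hn θ (M+n-1) := ang_mono hn hmono hrange (by omega)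
    have hlb : ang hn θ M ≤ ang hn θ (q-n) := ang_mono hn hmono hrange (by omega)
    exact Real.cos_neg_of_pi_div_two_lt_of_lt (by rw [heq, hβ]; linarith)
      (by rw [heq, hβ]; linarith)

/-! #### The two main directions -/

lemma not_thick (hn3 : 3 ≤ n) (hodd : Odd n) (hmono : StrictMono θ)
    (hrange : ∀ i, θ i ∈ Set.Ico 0 Real.pi) {ε : Fin n → Bool} {j : ℕ}
    (h1 : chosen ε j = true) (h2 : chosen ε (j+1) = true) : ¬ Thick θ ε := by
  intro hthick
  have hn : 0 < n := by omega
  have hmod2 : n % 2 = 1 := Nat.odd_iff.mp hodd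
  have s1 : cwin ε (j+1) + 1 = cwin ε j := cwin_step hn ε j h1
  have s2 : cwin ε (j+2) + 1 = cwin ε (j+1) := by
    have := cwin_step hn ε (j+1) h2
    rwa [show j+1+1 = j+2 by omega] at this
  have s3 : cwin ε (j+n) + cwin ε j = n := cwin_flip hn ε j
  have hM : ∃ M0, cwin ε M0 ≤ (n-3)/2 := by
    by_cases hc : cwin ε (j+2) ≤ (n-3)/2
    · exact ⟨j+2, hc⟩
    · exact ⟨j+n, by omega⟩
  obtain ⟨M0, hM0⟩ := hM
  set M := M0 % (2*n) with hMdef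
  have hMlt : M < 2*n := Nat.mod_lt _ (by omega)
  have hMc : cwin ε M ≤ (n-3)/2 := by
    rw [cwin_congr ε (Nat.mod_mod_of_dvd M0 dvd_rfl : M0 % (2*n) % (2*n) = M0 % (2*n))]
    exact hM0
  obtain ⟨v, hv, hwin⟩ := window_halfplane hn hmono hrange M
  have hth := hthick v hv
  set pos : Fin n → ℕ := fun i => if ε i then i.val else i.val + n with hposdef
  set q : Fin n → ℕ := fun i => if pos i < M then pos i + 2*n else pos i with hqdef
  clear_value pos q
  have hpos_lt : ∀ i, pos i < 2*n := by
    intro i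
    have := i.isLt
    rw [hposdef]
    dsimp only
    split <;> omega
  have hq_range : ∀ i, M ≤ q i ∧ q i < M + 2*n := by
    intro i
    have h := hpos_lt i
    rw [hqdef]
    dsimp only
    split <;> omega
  have hq_mod : ∀ i, (q i) % (2*n) = (pos i) % (2*n) := by
    intro i
    rw [hqdef]
    dsimp only
    split
    · rw [Nat.add_mod_right]
    · rfl
  have hang_pos : ∀ i : Fin n, vtx θ ε i = spt θ (pos i) := by
    intro i
    have hilt := i.isLt
    rw [spt_eq hn, hposdef]
    dsimp only
    by_cases hεi : ε i
    · rw [if_pos hεi]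
      have e : (⟨i.val % n, Nat.mod_lt _ hn⟩ : Fin n) = i := Fin.ext (Nat.mod_eq_of_lt hilt)
      unfold vtx ang
      rw [if_pos hεi, e, Nat.div_eq_of_lt hilt]
      simp
    · rw [if_neg hεi]
      have e : (⟨(i.val + n) % n, Nat.mod_lt _ hn⟩ : Fin n) = i :=
        Fin.ext (show (i.val + n) % n = i.val by
          rw [Nat.add_mod_right]; exact Nat.mod_eq_of_lt hilt)
      unfold vtx ang
      rw [if_neg hεi, e, Nat.add_div_right _ hn, Nat.div_eq_of_lt hilt]
      norm_num [pt_add_pi]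
  have hvtx : ∀ i : Fin n, vtx θ ε i = spt θ (q i) := by
    intro i
    rw [hang_pos i, spt_eq hn, spt_eq hn]
    rw [hqdef]
    dsimp only
    split
    · rw [show pos i + 2*n = 2*n*1 + pos i by ring, ang_rep hn]
      rw [show ((1:ℕ):ℝ) * (2*Real.pi) = ((1:ℕ):ℝ) * (2*Real.pi) from rfl]
      push_cast
      rw [one_mul, show ang hn θ (pos i) + 2*Real.pi = ang hn θ (pos i) + (1:ℕ) * (2*Real.pi)
        by push_cast; ring, pt_add_nat_mul_two_pi]
    · rfl
  have hchosen : ∀ i : Fin n, chosen ε (q i) = true := by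
    intro i
    rw [chosen_congr ε (hq_mod i), hposdef]
    dsimp only
    by_cases hεi : ε i
    · rw [if_pos hεi, chosen_lt ε i.isLt]
      simpa using hεi
    · rw [if_neg hεi, chosen_add_n hn, chosen_lt ε i.isLt]
      simp only [Bool.not_eq_true'] at hεi ⊢
      simpa using hεi
  have hset : {i : Fin n | 0 < dotp v (vtx θ ε i)}
      = ↑(Finset.univ.filter (fun i : Fin n => 0 < dotp v (vtx θ ε i))) := by
    ext i; simp
  rw [hset, Set.ncard_coe_finset] at hth
  have hcard : (Finset.univ.filter (fun i : Fin n => 0 < dotp v (vtx θ ε i))).card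
      ≤ cwin ε M := by
    unfold cwin
    apply Finset.card_le_card_of_injOn (fun i => q i - M)
    · intro i hi
      rw [Finset.mem_coe] at hi ⊢
      simp only [Finset.mem_filter, Finset.mem_univ, true_and] at hi
      rw [hvtx i] at hi
      have hq := hq_range i
      have hlt : q i < M + n := by
        by_contra hge
        have := (hwin (q i) hq.1).2 (le_of_not_gt hge) hq.2
        linarith
      simp only [Finset.mem_filter, Finset.mem_range]
      refine ⟨by omega, ?_⟩
      rw [show M + (q i - M) = q i by omega]
      exact hchosen i
    · intro i1 hi1 i2 hi2 he
      have he' : q i1 - M = q i2 - M := he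
      have hq1 := hq_range i1
      have hq2 := hq_range i2
      have hqe : q i1 = q i2 := by omega
      have hm : pos i1 % (2*n) = pos i2 % (2*n) := by
        rw [← hq_mod i1, ← hq_mod i2, hqe]
      have hp : pos i1 = pos i2 := by
        rwa [Nat.mod_eq_of_lt (hpos_lt i1), Nat.mod_eq_of_lt (hpos_lt i2)] at hm
      have hl1 := i1.isLt
      have hl2 := i2.isLt
      apply Fin.ext
      rw [hposdef] at hp
      dsimp only at hp
      split_ifs at hp <;> omega
  have : (n-1)/2 ≤ (n-3)/2 := le_trans hth (le_trans hcard hMc)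
  omega

lemma thick_of_alt (hn : 0 < n) (hodd : Odd n) (hmono : StrictMono θ)
    (hrange : ∀ i, θ i ∈ Set.Ico 0 Real.pi) {ε : Fin n → Bool}
    (halt : ∀ i : Fin n, ε i = (ε ⟨0, hn⟩).xor (decide (i.val % 2 = 1))) :
    Thick θ ε := by
  classical
  intro v hv
  have hab : ¬(v.1 = 0 ∧ v.2 = 0) := by
    intro h
    exact hv (Prod.ext h.1 h.2)
  obtain ⟨t, ht0, htpi, s, hsig⟩ := sign_struct v.1 v.2 hab
  set b := ε ⟨0, hn⟩ with hb
  clear_value b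
  set rs : ℕ := if b = s then 0 else 1 with hrs
  have hrs2 : rs < 2 := by rw [hrs]; split <;> omega
  have hεs : ∀ i : Fin n, (ε i = s ↔ i.val % 2 = rs) := by
    intro i
    rw [halt i, hrs]
    rcases Nat.mod_two_eq_zero_or_one i.val with h | h <;>
      rw [h] <;> cases b <;> cases s <;> simp
  have hεns : ∀ i : Fin n, (ε i = !s ↔ i.val % 2 = 1 - rs) := by
    intro i
    rw [halt i, hrs]
    rcases Nat.mod_two_eq_zero_or_one i.val with h | h <;>
      rw [h] <;> cases b <;> cases s <;> simp
  have hmem : ∀ i : Fin n, (0 < dotp v (vtx θ ε i)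
      ↔ ((θ i < t ∧ ε i = s) ∨ (t < θ i ∧ ε i = !s))) := by
    intro i
    have hsi := hsig (θ i) (hrange i).1 (hrange i).2
    have hdot : dotp v (pt (θ i)) = v.1 * Real.cos (θ i) + v.2 * Real.sin (θ i) := rfl
    have hdotneg : dotp v (-pt (θ i)) = -(v.1 * Real.cos (θ i) + v.2 * Real.sin (θ i)) := by
      simp [dotp, pt]; ring
    cases hεi : ε i with
    | true =>
      have : 0 < dotp v (vtx θ ε i) ↔ 0 < v.1 * Real.cos (θ i) + v.2 * Real.sin (θ i) := by
        rw [vtx, hεi, if_pos rfl, hdot]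
      rw [this, hsi.1]
      cases s <;> simp
    | false =>
      have : 0 < dotp v (vtx θ ε i) ↔ v.1 * Real.cos (θ i) + v.2 * Real.sin (θ i) < 0 := by
        rw [vtx, hεi]
        simp only [Bool.false_eq_true, if_false]
        rw [hdotneg]
        constructor <;> intro <;> linarith
      rw [this, hsi.2]
      cases s <;> simp
  set k := (Finset.univ.filter (fun i : Fin n => θ i < t)).card with hk
  set k2 := (Finset.univ.filter (fun i : Fin n => θ i ≤ t)).card with hk2
  have hkc : ∀ i : Fin n, θ i < t ↔ i.val < k :=
    lower_card (fun i j hij hPi => lt_of_le_of_lt (hmono.monotone hij) hPi)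
  have hk2c : ∀ i : Fin n, θ i ≤ t ↔ i.val < k2 :=
    lower_card (fun i j hij hPi => le_trans (hmono.monotone hij) hPi)
  have hkn : k ≤ n := le_trans (Finset.card_filter_le _ _) (by simp)
  have hk2n : k2 ≤ n := le_trans (Finset.card_filter_le _ _) (by simp)
  have hkle : k ≤ k2 := by
    apply Finset.card_le_card
    apply Finset.monotone_filter_right
    intro i _ hi
    exact le_of_lt hi
  have hk21 : k2 ≤ k + 1 := by
    have hsub : Finset.univ.filter (fun i : Fin n => θ i ≤ t)
        ⊆ Finset.univ.filter (fun i : Fin n => θ i < t)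
          ∪ Finset.univ.filter (fun i : Fin n => θ i = t) := by
      intro i hi
      simp only [Finset.mem_filter, Finset.mem_univ, true_and, Finset.mem_union] at hi ⊢
      rcases lt_or_eq_of_le hi with h | h
      exacts [Or.inl h, Or.inr h]
    have hcard1 : (Finset.univ.filter (fun i : Fin n => θ i = t)).card ≤ 1 := by
      apply Finset.card_le_one.mpr
      intro i hi j hj
      simp only [Finset.mem_filter, Finset.mem_univ, true_and] at hi hj
      exact hmono.injective (hi.trans hj.symm)
    calc k2 ≤ _ := Finset.card_le_card hsub
    _ ≤ k + (Finset.univ.filter (fun i : Fin n => θ i = t)).card := Finset.card_union_le _ _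
    _ ≤ k + 1 := by omega
  have hset : {i : Fin n | 0 < dotp v (vtx θ ε i)} =
      ↑(Finset.univ.filter (fun i : Fin n =>
        (i.val < k ∧ i.val % 2 = rs) ∨ (k2 ≤ i.val ∧ i.val % 2 = 1 - rs))) := by
    ext i
    simp only [Set.mem_setOf_eq, Finset.coe_filter, Finset.mem_univ, true_and]
    rw [hmem i, hεs i, hεns i, hkc i]
    have h2 : t < θ i ↔ k2 ≤ i.val := by
      rw [← not_le, hk2c i, not_lt]
    rw [h2]
  rw [hset, Set.ncard_coe_finset,
    card_filter_val (fun m => (m < k ∧ m % 2 = rs) ∨ (k2 ≤ m ∧ m % 2 = 1 - rs))]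
  rw [Finset.filter_or, Finset.card_union_of_disjoint (by
    simp only [Finset.disjoint_left, Finset.mem_filter, Finset.mem_range]
    rintro a ⟨_, _, h1'⟩ ⟨_, _, h2'⟩
    omega)]
  have e1 : (Finset.range n).filter (fun m => m < k ∧ m % 2 = rs)
      = (Finset.range k).filter (fun m => m % 2 = rs) := by
    ext m
    simp only [Finset.mem_filter, Finset.mem_range]
    omega
  have c1 : ((Finset.range n).filter (fun m => m < k ∧ m % 2 = rs)).card = (k + 1 - rs)/2 := by
    rw [e1, card_mod2 rs hrs2]
  have esplit : (Finset.range n).filter (fun m => m % 2 = 1 - rs)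
      = (Finset.range k2).filter (fun m => m % 2 = 1 - rs)
        ∪ (Finset.range n).filter (fun m => k2 ≤ m ∧ m % 2 = 1 - rs) := by
    ext m
    simp only [Finset.mem_filter, Finset.mem_range, Finset.mem_union]
    omega
  have c4 : (k2 + 1 - (1 - rs))/2
      + ((Finset.range n).filter (fun m => k2 ≤ m ∧ m % 2 = 1 - rs)).card
      = (n + 1 - (1 - rs))/2 := by
    rw [← card_mod2 (1-rs) (by omega) n, ← card_mod2 (1-rs) (by omega) k2, esplit,
      Finset.card_union_of_disjoint]
    simp only [Finset.disjoint_left, Finset.mem_filter, Finset.mem_range]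
    rintro a ⟨ha, _⟩ ⟨_, ha2, _⟩
    omega
  have hmod2 : n % 2 = 1 := Nat.odd_iff.mp hodd
  omega

end Aux

/-- For n odd, an antipodal polygon is thick iff no two points of S adjacent in
circular order are both vertices of it. -/
theorem stmt_19 (n : ℕ) (hodd : Odd n) (θ : Fin n → ℝ) (hmono : StrictMono θ)
    (hrange : ∀ i, θ i ∈ Set.Ico 0 Real.pi) (ε : Fin n → Bool) :
    Thick θ ε ↔ ∀ j : ℕ, ¬ (chosen ε j = true ∧ chosen ε (j + 1) = true) := by
  have hn : 0 < n := hodd.pos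
  constructor
  · intro hthick j hcon
    have hn13 : n = 1 ∨ 3 ≤ n := by
      have := Nat.odd_iff.mp hodd
      omega
    rcases hn13 with h1 | h3
    · subst h1
      have h := chosen_add_n one_pos ε j
      rw [hcon.1, hcon.2] at h
      simp at h
    · exact absurd hthick (not_thick h3 hodd hmono hrange hcon.1 hcon.2)
  · intro hna
    apply thick_of_alt hn hodd hmono hrange
    intro i
    have hf := chosen_formula hn (chosen_succ hn hna) i.val
    rw [chosen_lt ε i.isLt] at hf
    simpa using hf
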